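/- Let X be a V-space with uniformly vanishing asymmetry. A filter F on X is Cauchy if and only if it is op-Cauchy. Consequently, X is Cauchy complete if and only if X is op-Cauchy complete. -/
import Mathlib


open Filter Set

/-- `a` is well-above `b`: for every `S` with `sInf S ≤ b` some `s ∈ S` satisfies `s ≤ a`. -/
def WellAbove {V : Type*} [CompleteLattice V] (a b : V) : Prop :=
  ∀ S : Set V, sInf S ≤ b → ∃ s ∈ S, s ≤ a

/-- Flagg's value quantales (bottom element plays the role of `0`). -/
class ValueQuantale (V : Type*) extends CompleteLattice V, Add V where
  add_comm' : ∀ a b : V, a + b = b + a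
  add_assoc' : ∀ a b c : V, a + b + c = a + (b + c)
  add_bot' : ∀ a : V, a + ⊥ = a
  sInf_wellAbove : ∀ x : V, x = sInf {y | WellAbove y x}
  add_sInf' : ∀ (x : V) (S : Set V), x + sInf S = sInf ((x + ·) '' S)
  inf_wellAbove_bot : ∀ a b : V, WellAbove a ⊥ → WellAbove b ⊥ → WellAbove (a ⊓ b) ⊥

variable {V : Type*} [ValueQuantale V] {X : Type*}

/-- n-fold sum `n·δ`. -/
def nmul : ℕ → V → V
  | 0, _ => ⊥
  | n + 1, δ => δ + nmul n δ

/-- The ball `B_ε(x)`. -/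
def ball' (d : X → X → V) (ε : V) (x : X) : Set X := {y | d x y ≤ ε}

/-- The op-ball `B^ε(x)`. -/
def opBall (d : X → X → V) (ε : V) (x : X) : Set X := {y | d y x ≤ ε}

/-- `B_ε(S)`. -/
def ballSet (d : X → X → V) (ε : V) (S : Set X) : Set X := ⋃ s ∈ S, ball' d ε s

/-- Cauchy filter on a `V`-space. -/
def IsCauchyF (d : X → X → V) (F : Filter X) : Prop :=
  ∀ ε : V, WellAbove ε ⊥ → ∃ x : X, ball' d ε x ∈ F

/-- op-Cauchy filter on a `V`-space. -/
def IsOpCauchyF (d : X → X → V) (F : Filter X) : Prop :=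
  ∀ ε : V, WellAbove ε ⊥ → ∃ x : X, opBall d ε x ∈ F

/-- Round filter. -/
def IsRound (d : X → X → V) (F : Filter X) : Prop :=
  ∀ F₀ ∈ F, ∃ ε : V, WellAbove ε ⊥ ∧ ∀ x : X, ball' d ε x ∈ F → ball' d ε x ⊆ F₀

/-- Minimal Cauchy filter: Cauchy with no proper Cauchy subfilter.
(A subfilter `G ⊆ F` in the set-of-sets sense corresponds to `G.sets ⊆ F.sets`.) -/
def IsMinCauchy (d : X → X → V) (F : Filter X) : Prop :=
  IsCauchyF d F ∧ ∀ G : Filter X, IsCauchyF d G → G.sets ⊆ F.sets → G = F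

/-- `F_≻`: the filter generated by the sets `B_ε(F₀)`, `F₀ ∈ F`, `ε ≻ 0`. -/
def roundify (d : X → X → V) (F : Filter X) : Filter X :=
  Filter.generate {S | ∃ F₀ ∈ F, ∃ ε : V, WellAbove ε ⊥ ∧ S = ballSet d ε F₀}

/-- Uniformly vanishing asymmetry. -/
def UVA (d : X → X → V) : Prop :=
  ∀ ε : V, WellAbove ε ⊥ → ∃ δ : V, WellAbove δ ⊥ ∧ ∀ x y : X, d y x ≤ δ → d x y ≤ ε

/-- Distance between subsets: `d(S,T) = ⋀_{s∈S,t∈T} d(s,t)`. -/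
def distSet (d : X → X → V) (S T : Set X) : V := ⨅ s ∈ S, ⨅ t ∈ T, d s t

/-- Distance between filters: `d(F,G) = ⋁_{F₀∈F,G₀∈G} d(F₀,G₀)`. -/
def distF (d : X → X → V) (F G : Filter X) : V :=
  ⨆ F₀ ∈ F, ⨆ G₀ ∈ G, distSet d F₀ G₀

/-- `F_x`, the filter generated by the balls `B_ε(x)`, `ε ≻ 0`. -/
def ptFilter (d : X → X → V) (x : X) : Filter X :=
  Filter.generate {S | ∃ ε : V, WellAbove ε ⊥ ∧ S = ball' d ε x}

/-- `F^x`, the filter generated by the op-balls `B^ε(x)`, `ε ≻ 0`. -/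
def opPtFilter (d : X → X → V) (x : X) : Filter X :=
  Filter.generate {S | ∃ ε : V, WellAbove ε ⊥ ∧ S = opBall d ε x}

/-- Under uniformly vanishing asymmetry, a filter is Cauchy iff op-Cauchy;
consequently `X` is Cauchy complete iff it is op-Cauchy complete. -/
theorem stmt10 (d : X → X → V) (hrefl : ∀ x, d x x = ⊥)
    (htri : ∀ x y z, d x z ≤ d x y + d y z) (hUVA : UVA d) :
    (∀ F : Filter X, IsCauchyF d F ↔ IsOpCauchyF d F) ∧
    ((∀ F : Filter X, F ≠ ⊥ → IsCauchyF d F → ∃ x : X, ∀ ε : V, WellAbove ε ⊥ → ball' d ε x ∈ F)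
      ↔
     (∀ F : Filter X, F ≠ ⊥ → IsOpCauchyF d F → ∃ x : X, ∀ ε : V, WellAbove ε ⊥ → opBall d ε x ∈ F)) := by
  have key1 : ∀ ε : V, WellAbove ε ⊥ → ∃ δ : V, WellAbove δ ⊥ ∧
      ∀ x : X, ball' d δ x ⊆ opBall d ε x := by
    intro ε hε
    obtain ⟨δ, hδ, h⟩ := hUVA ε hε
    exact ⟨δ, hδ, fun x y hy => h y x hy⟩
  have key2 : ∀ ε : V, WellAbove ε ⊥ → ∃ δ : V, WellAbove δ ⊥ ∧
      ∀ x : X, opBall d δ x ⊆ ball' d ε x := by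
    intro ε hε
    obtain ⟨δ, hδ, h⟩ := hUVA ε hε
    exact ⟨δ, hδ, fun x y hy => h x y hy⟩
  have hiff : ∀ F : Filter X, IsCauchyF d F ↔ IsOpCauchyF d F := by
    intro F
    constructor
    · intro hF ε hε
      obtain ⟨δ, hδ, h⟩ := key1 ε hε
      obtain ⟨x, hx⟩ := hF δ hδ
      exact ⟨x, Filter.mem_of_superset hx (h x)⟩
    · intro hF ε hε
      obtain ⟨δ, hδ, h⟩ := key2 ε hε
      obtain ⟨x, hx⟩ := hF δ hδ
      exact ⟨x, Filter.mem_of_superset hx (h x)⟩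
  refine ⟨hiff, ?_, ?_⟩
  · intro hc F hF hop
    obtain ⟨x, hx⟩ := hc F hF ((hiff F).mpr hop)
    refine ⟨x, fun ε hε => ?_⟩
    obtain ⟨δ, hδ, h⟩ := key1 ε hε
    exact Filter.mem_of_superset (hx δ hδ) (h x)
  · intro hc F hF hca
    obtain ⟨x, hx⟩ := hc F hF ((hiff F).mp hca)
    refine ⟨x, fun ε hε => ?_⟩
    obtain ⟨δ, hδ, h⟩ := key2 ε hε
    exact Filter.mem_of_superset (hx δ hδ) (h x)
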